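/- Let n = 2 and m ≥ 2. There is a surjective group homomorphism π: Z_2(D_{Z_m}) → Z/m with π(h_1) = 0 and π(u) = 1̄; π admits a group-homomorphism section defined by 1̄ ↦ u; and ker π is isomorphic to the Artin group A(I_2(m)) of dihedral type I_2(m) via an isomorphism sending a ↦ u h_1 u^{-1} and h ↦ h_1. (In particular Z_2(D_{Z_m}) is a semidirect product A(I_2(m)) ⋊ Z/m.) -/

import Mathlib

namespace Stmt4

/-- `alt x y k` is the alternating product `x y x y ⋯` with `k` factors, starting with `x`. -/
def alt {G : Type*} [Monoid G] (x y : G) : ℕ → G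
  | 0 => 1
  | k + 1 => x * alt y x k

/-- Generators of `Z_2(D_{Z_m})`: `false` is `h_1`, `true` is `u`. -/
abbrev ZGen := Bool

def zh : FreeGroup ZGen := FreeGroup.of false

def zu : FreeGroup ZGen := FreeGroup.of true

/-- Defining relations of `Z_2(D_{Z_m})`. -/
def zrels (m : ℕ) : Set (FreeGroup ZGen) :=
  {r | r = zu ^ m ∨ r = (zh * zu * zh) * zu * (zu * (zh * zu * zh))⁻¹}

/-- The orbifold braid group `Z_2(D_{Z_m})`. -/
abbrev Z (m : ℕ) := PresentedGroup (zrels m)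

/-- Generators of the Artin group `A(I_2(m))`: `false` is `h`, `true` is `a`. -/
abbrev AGen := Bool

def ah : FreeGroup AGen := FreeGroup.of false

def aa : FreeGroup AGen := FreeGroup.of true

/-- Defining relation `⟨h,a⟩_m = ⟨a,h⟩_m` of the Artin group of dihedral type `I_2(m)`. -/
def arels (m : ℕ) : Set (FreeGroup AGen) :=
  {r | r = alt ah aa m * (alt aa ah m)⁻¹}

/-- The Artin group `A(I_2(m))`. -/
abbrev A (m : ℕ) := PresentedGroup (arels m)

section Generic
variable {G : Type*} [Monoid G]

lemma map_alt {H : Type*} [Monoid H] (f : G →* H) (x y : G) (k : ℕ) :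
    f (alt x y k) = alt (f x) (f y) k := by
  induction k generalizing x y with
  | zero => simp [alt]
  | succ k ih => simp [alt, ih]

lemma alt_add_two (x y : G) (k : ℕ) : alt x y (k+2) = x * (y * alt x y k) := rfl

lemma alt_two_mul (x y : G) (k : ℕ) : alt x y (2*k) = (x*y)^k := by
  induction k with
  | zero => simp [alt]
  | succ k ih =>
      rw [show 2*(k+1) = 2*k+2 by ring, alt_add_two, ih, pow_succ', mul_assoc]

lemma alt_two_mul_add_one (x y : G) (k : ℕ) : alt x y (2*k+1) = (x*y)^k * x := by
  induction k with
  | zero => simp [alt]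
  | succ k ih =>
      rw [show 2*(k+1)+1 = (2*k+1)+2 by ring, alt_add_two, ih]
      simp [pow_succ', mul_assoc]

lemma semi (x y : G) (k : ℕ) : y * (x*y)^k = (y*x)^k * y :=
  (SemiconjBy.pow_right (by simp [SemiconjBy, mul_assoc]) k)

end Generic

section GroupLemmas
variable {G : Type*} [Group G]

lemma even_comm_y (x y : G) (k : ℕ) (hb : (x*y)^k = (y*x)^k) :
    y * (x*y)^k = (x*y)^k * y := by rw [semi, ← hb]

lemma even_comm_x (x y : G) (k : ℕ) (hb : (x*y)^k = (y*x)^k) :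
    x * (x*y)^k = (x*y)^k * x := by rw [hb, semi y x k, hb]

lemma odd1 (x y : G) (k : ℕ) (hb : (x*y)^k * x = (y*x)^k * y) :
    y * (x*y)^k = (x*y)^k * x := (semi x y k).trans hb.symm

lemma odd2 (x y : G) (k : ℕ) (hb : (x*y)^k * x = (y*x)^k * y) :
    x * ((x*y)^k * x) = (x*y)^(k+1) := by
  rw [hb, ← mul_assoc, semi y x k, pow_succ, mul_assoc]

lemma conjR1 (x y : G) (m : ℕ) (hb : alt x y m = alt y x m) :
    alt y (y⁻¹*(x*y)) m = alt (y⁻¹*(x*y)) y m := by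
  have hyz : y * (y⁻¹*(x*y)) = x*y := by group
  have hzy : (y⁻¹*(x*y)) * y = y⁻¹*(x*y)*(y⁻¹)⁻¹ := by group
  rcases Nat.even_or_odd m with ⟨k, hk⟩ | ⟨k, hk⟩
  · have hm2 : m = 2*k := by omega
    subst hm2
    rw [alt_two_mul, alt_two_mul] at hb ⊢
    rw [hyz, hzy, conj_pow, inv_inv, mul_assoc, ← even_comm_y x y k hb,
      inv_mul_cancel_left]
  · subst hk
    rw [alt_two_mul_add_one, alt_two_mul_add_one] at hb ⊢
    rw [hyz, hzy, conj_pow]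
    have h1 := odd1 x y k hb
    -- goal : (x*y)^k * y = y⁻¹*(x*y)^k*(y⁻¹)⁻¹*(y⁻¹*(x*y))
    rw [inv_inv]
    calc (x*y)^k * y = y⁻¹ * (y * (x*y)^k) * y := by group
    _ = y⁻¹ * ((x*y)^k * x) * y := by rw [h1]
    _ = y⁻¹*(x*y)^k*y*(y⁻¹*(x*y)) := by group

lemma conjR2 (x y : G) (m : ℕ) (hb : alt x y m = alt y x m) :
    alt (x*(y*x⁻¹)) x m = alt x (x*(y*x⁻¹)) m := by
  have hzx : (x*(y*x⁻¹)) * x = x*y := by group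
  have hxz : x * (x*(y*x⁻¹)) = x*(x*y)*x⁻¹ := by group
  rcases Nat.even_or_odd m with ⟨k, hk⟩ | ⟨k, hk⟩
  · have hm2 : m = 2*k := by omega
    subst hm2
    rw [alt_two_mul, alt_two_mul] at hb ⊢
    rw [hzx, hxz, conj_pow, even_comm_x x y k hb, mul_inv_cancel_right]
  · subst hk
    rw [alt_two_mul_add_one, alt_two_mul_add_one] at hb ⊢
    rw [hzx, hxz, conj_pow]
    have h2 := odd2 x y k hb
    calc (x*y)^k * (x*(y*x⁻¹)) = ((x*y)^(k+1)) * x⁻¹ := by rw [pow_succ]; group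
    _ = x * ((x*y)^k * x) * x⁻¹ := by rw [← h2, mul_assoc]
    _ = x*(x*y)^k*x⁻¹*x := by group

end GroupLemmas

section Orbifold
variable {G : Type*} [Group G]

lemma orb_conj (h u : G) (hr : h*u*h*u = u*h*u*h) :
    (u*h*u⁻¹)⁻¹ * (h * (u*h*u⁻¹)) = u*(u*h*u⁻¹)*u⁻¹ := by
  calc (u*h*u⁻¹)⁻¹ * (h * (u*h*u⁻¹)) = u*h⁻¹*u⁻¹*(h*u*h*u)*(u⁻¹*u⁻¹) := by group
  _ = u*h⁻¹*u⁻¹*(u*h*u*h)*(u⁻¹*u⁻¹) := by rw [hr]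
  _ = u*(u*h*u⁻¹)*u⁻¹ := by group

lemma orb_braid (h u : G) (m : ℕ) (hum : u^m = 1) (hr : h*u*h*u = u*h*u*h) :
    alt h (u*h*u⁻¹) m = alt (u*h*u⁻¹) h m := by
  have hch : Commute h (h*u*h*u) := by
    show h*(h*u*h*u) = (h*u*h*u)*h
    calc h*(h*u*h*u) = h*(u*h*u*h) := by rw [hr]
    _ = (h*u*h*u)*h := by group
  have huc : Commute u (h*u*h*u) := by
    show u*(h*u*h*u) = (h*u*h*u)*u
    calc u*(h*u*h*u) = (u*h*u*h)*u := by group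
    _ = (h*u*h*u)*u := by rw [hr]
  have hcu2 : Commute (h*u*h*u) ((u*u)⁻¹) := ((huc.mul_left huc).symm).inv_right
  have key : ∀ k:ℕ, (h*(u*h*u⁻¹))^k = (h*u*h*u)^k * (((u*u)^k)⁻¹) := by
    intro k
    have e1 : h*(u*h*u⁻¹) = (h*u*h*u) * (u*u)⁻¹ := by group
    rw [e1, hcu2.mul_pow, inv_pow]
  rcases Nat.even_or_odd m with ⟨k, hk⟩ | ⟨k, hk⟩
  · have hm2 : m = 2*k := by omega
    subst hm2
    have hu2k : (u*u)^k = 1 := by rw [← pow_two, ← pow_mul]; exact hum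
    have hcak : Commute (u*h*u⁻¹) ((h*u*h*u)^k) :=
      ((huc.pow_right k).mul_left (hch.pow_right k)).mul_left (huc.pow_right k).inv_left
    rw [alt_two_mul, alt_two_mul]
    rw [key k, hu2k, inv_one, mul_one]
    have e2 : (u*h*u⁻¹)*h = (u*h*u⁻¹)*(h*(u*h*u⁻¹))*(u*h*u⁻¹)⁻¹ := by group
    rw [e2, conj_pow, key k, hu2k, inv_one, mul_one]
    rw [hcak.eq, mul_inv_cancel_right]
  · subst hk
    have hu2k : (u*u)^k = u⁻¹ := by
      rw [← pow_two, ← pow_mul]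
      have := hum
      rw [pow_succ] at this
      exact eq_inv_of_mul_eq_one_left this
    have hcak : Commute (u*h*u⁻¹) ((h*u*h*u)^k) :=
      ((huc.pow_right k).mul_left (hch.pow_right k)).mul_left (huc.pow_right k).inv_left
    rw [alt_two_mul_add_one, alt_two_mul_add_one]
    rw [← semi h (u*h*u⁻¹) k]
    rw [key k, hu2k, inv_inv]
    rw [← mul_assoc, hcak.eq, mul_assoc, mul_assoc ((h*u*h*u)^k) (u*h*u⁻¹) u]
    congr 1
    group

end Orbifold


lemma mk_rel {α : Type*} {rels : Set (FreeGroup α)} {r : FreeGroup α} (h : r ∈ rels) :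
    PresentedGroup.mk rels r = 1 :=
  (QuotientGroup.eq_one_iff r).mpr (Subgroup.subset_normalClosure h)

variable (m : ℕ)

def ZH : Z m := PresentedGroup.of false
def ZU : Z m := PresentedGroup.of true
def AX : A m := PresentedGroup.of false
def AY : A m := PresentedGroup.of true

lemma relU : (ZU m)^m = 1 := by
  have h := mk_rel (rels := zrels m) (r := zu^m) (Or.inl rfl)
  rwa [map_pow] at h

lemma relHU : ZH m * ZU m * ZH m * ZU m = ZU m * ZH m * ZU m * ZH m := by
  have h := mk_rel (rels := zrels m) (r := (zh * zu * zh) * zu * (zu * (zh * zu * zh))⁻¹)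
    (Or.inr rfl)
  rw [map_mul, map_inv, mul_inv_eq_one, map_mul, map_mul, map_mul, map_mul, map_mul] at h
  simp only [mul_assoc] at h ⊢; exact h

lemma relA : alt (AX m) (AY m) m = alt (AY m) (AX m) m := by
  have h := mk_rel (rels := arels m) (r := alt ah aa m * (alt aa ah m)⁻¹) rfl
  rw [map_mul, map_inv, mul_inv_eq_one, map_alt, map_alt] at h
  exact h

lemma hπ : ∀ r ∈ zrels m,
    FreeGroup.lift (fun b => cond b (Multiplicative.ofAdd (1 : ZMod m)) 1) r = 1 := by
  rintro r (rfl | rfl)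
  · rw [map_pow]
    simp only [zu, FreeGroup.lift_apply_of, cond_true]
    rw [← ofAdd_nsmul, nsmul_eq_mul, mul_one, ZMod.natCast_self]
    rfl
  · simp [zh, zu]

def π : Z m →* Multiplicative (ZMod m) := PresentedGroup.toGroup (hπ m)

lemma π_ZH : π m (ZH m) = 1 := PresentedGroup.toGroup.of _
lemma π_ZU : π m (ZU m) = Multiplicative.ofAdd (1 : ZMod m) := PresentedGroup.toGroup.of _

section ZModHom
variable {G : Type*} [Group G]

def zmodAux (x : G) (hx : x ^ m = 1) : {f : ℤ →+ Additive G // f m = 0} :=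
  ⟨MonoidHom.toAdditiveRight (zpowersHom G x), by
      show Additive.ofMul (x ^ ((m : ℤ))) = 0
      rw [zpow_natCast, hx]; rfl⟩

def zmodHom (x : G) (hx : x ^ m = 1) : Multiplicative (ZMod m) →* G :=
  AddMonoidHom.toMultiplicativeLeft (ZMod.lift m (zmodAux m x hx))

lemma zmodHom_intCast (x : G) (hx : x ^ m = 1) (n : ℤ) :
    zmodHom m x hx (Multiplicative.ofAdd ((n : ZMod m))) = x ^ n := by
  have h : zmodHom m x hx (Multiplicative.ofAdd ((n : ZMod m)))
      = Additive.toMul ((ZMod.lift m (zmodAux m x hx)) ((n : ZMod m))) := rfl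
  rw [h, ZMod.lift_coe]
  rfl

lemma zmodHom_one (x : G) (hx : x ^ m = 1) :
    zmodHom m x hx (Multiplicative.ofAdd (1 : ZMod m)) = x := by
  have := zmodHom_intCast m x hx 1
  simpa using this

lemma ofAdd_one_zpow (n : ℤ) :
    (Multiplicative.ofAdd (1 : ZMod m))^n = Multiplicative.ofAdd ((n : ZMod m)) := by
  rw [← ofAdd_zsmul, zsmul_one]

lemma zmod_hom_ext {M : Type*} [Group M] (f g : Multiplicative (ZMod m) →* M)
    (h : f (Multiplicative.ofAdd (1 : ZMod m)) = g (Multiplicative.ofAdd (1 : ZMod m))) :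
    f = g := by
  refine MonoidHom.ext fun z => ?_
  obtain ⟨n, hn⟩ := ZMod.intCast_surjective (Multiplicative.toAdd z)
  have hz : z = (Multiplicative.ofAdd (1 : ZMod m))^n := by
    rw [ofAdd_one_zpow, hn]; rfl
  rw [hz, map_zpow, map_zpow, h]

end ZModHom

def s : Multiplicative (ZMod m) →* Z m := zmodHom m (ZU m) (relU m)

lemma hφfwd : ∀ r ∈ arels m,
    FreeGroup.lift (fun b => cond b ((AY m)⁻¹*(AX m*AY m)) (AY m)) r = 1 := by
  rintro r rfl
  rw [map_mul, map_inv, mul_inv_eq_one, map_alt, map_alt]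
  simp only [ah, aa, FreeGroup.lift_apply_of, cond_true, cond_false]
  exact conjR1 (AX m) (AY m) m (relA m)

lemma hφbwd : ∀ r ∈ arels m,
    FreeGroup.lift (fun b => cond b (AX m) (AX m*(AY m*(AX m)⁻¹))) r = 1 := by
  rintro r rfl
  rw [map_mul, map_inv, mul_inv_eq_one, map_alt, map_alt]
  simp only [ah, aa, FreeGroup.lift_apply_of, cond_true, cond_false]
  exact conjR2 (AX m) (AY m) m (relA m)

def φfwd : A m →* A m := PresentedGroup.toGroup (hφfwd m)
def φbwd : A m →* A m := PresentedGroup.toGroup (hφbwd m)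

lemma φfwd_X : φfwd m (AX m) = AY m := PresentedGroup.toGroup.of _
lemma φfwd_Y : φfwd m (AY m) = (AY m)⁻¹*(AX m*AY m) := PresentedGroup.toGroup.of _
lemma φbwd_X : φbwd m (AX m) = AX m*(AY m*(AX m)⁻¹) := PresentedGroup.toGroup.of _
lemma φbwd_Y : φbwd m (AY m) = AX m := PresentedGroup.toGroup.of _

def φ₀ : A m ≃* A m :=
  MonoidHom.toMulEquiv (φfwd m) (φbwd m)
    (by
      apply PresentedGroup.ext
      rintro (_|_) <;>
      · rw [MonoidHom.comp_apply]
        simp only [show (PresentedGroup.of false : A m) = AX m from rfl,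
          show (PresentedGroup.of true : A m) = AY m from rfl,
          φfwd_X, φfwd_Y, φbwd_X, φbwd_Y, map_mul, map_inv, MonoidHom.id_apply]
        all_goals group)
    (by
      apply PresentedGroup.ext
      rintro (_|_) <;>
      · rw [MonoidHom.comp_apply]
        simp only [show (PresentedGroup.of false : A m) = AX m from rfl,
          show (PresentedGroup.of true : A m) = AY m from rfl,
          φfwd_X, φfwd_Y, φbwd_X, φbwd_Y, map_mul, map_inv, MonoidHom.id_apply]
        all_goals group)

lemma φ₀_X : φ₀ m (AX m) = AY m := φfwd_X m
lemma φ₀_Y : φ₀ m (AY m) = (AY m)⁻¹*(AX m*AY m) := φfwd_Y m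

lemma phi_sq : ∀ z : A m, φ₀ m (φ₀ m z) = (AX m*AY m)⁻¹ * (z * (AX m*AY m)) := by
  have h : ((φ₀ m).toMonoidHom.comp (φ₀ m).toMonoidHom)
      = (MulAut.conj ((AX m*AY m)⁻¹)).toMonoidHom := by
    apply PresentedGroup.ext
    rintro (_|_)
    · show φ₀ m (φ₀ m (AX m)) = (AX m*AY m)⁻¹ * AX m * ((AX m*AY m)⁻¹)⁻¹
      rw [φ₀_X, φ₀_Y]; group
    · show φ₀ m (φ₀ m (AY m)) = (AX m*AY m)⁻¹ * AY m * ((AX m*AY m)⁻¹)⁻¹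
      rw [φ₀_Y, map_mul, map_inv, map_mul, φ₀_X, φ₀_Y]; group
  intro z
  have h2 := DFunLike.congr_fun h z
  simp only [MonoidHom.comp_apply, MulEquiv.coe_toMonoidHom, MulAut.conj_apply] at h2
  rw [h2]; group

lemma phi_iter : ∀ (k : ℕ) (z : A m),
    ((φ₀ m)^(2*k)) z = ((AX m*AY m)^k)⁻¹ * (z * (AX m*AY m)^k) := by
  intro k
  induction k with
  | zero => intro z; simp
  | succ k ih =>
      intro z
      rw [show 2*(k+1) = (2*k)+1+1 by ring, pow_succ, pow_succ, MulAut.mul_apply,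
        MulAut.mul_apply, phi_sq, ih, pow_succ']
      generalize (AX m*AY m)^k = v
      generalize (AX m*AY m) = w
      group

lemma alt_eq_even {G : Type*} [Group G] {x y : G} {n k : ℕ} (hn : n = 2*k)
    (hb : alt x y n = alt y x n) : (x*y)^k = (y*x)^k := by
  subst hn; rwa [alt_two_mul, alt_two_mul] at hb

lemma alt_eq_odd {G : Type*} [Group G] {x y : G} {n k : ℕ} (hn : n = 2*k+1)
    (hb : alt x y n = alt y x n) : (x*y)^k * x = (y*x)^k * y := by
  subst hn; rwa [alt_two_mul_add_one, alt_two_mul_add_one] at hb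

lemma phi_pow_m : (φ₀ m)^m = 1 := by
  rcases Nat.even_or_odd m with ⟨k, hk⟩ | ⟨k, hk⟩
  · have hm2 : m = 2*k := by omega
    have hb := alt_eq_even hm2 (relA m)
    rw [show (φ₀ m)^m = (φ₀ m)^(2*k) from by rw [← hm2]]
    apply MulEquiv.toMonoidHom_injective
    apply PresentedGroup.ext
    rintro (_|_)
    · show ((φ₀ m)^(2*k)) (AX m) = AX m
      rw [phi_iter, even_comm_x (AX m) (AY m) k hb, inv_mul_cancel_left]
    · show ((φ₀ m)^(2*k)) (AY m) = AY m
      rw [phi_iter, even_comm_y (AX m) (AY m) k hb, inv_mul_cancel_left]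
  · have hb := alt_eq_odd hk (relA m)
    have o1 := odd1 (AX m) (AY m) k hb
    have o2 := odd2 (AX m) (AY m) k hb
    rw [show (φ₀ m)^m = (φ₀ m)^(2*k+1) from by rw [← hk]]
    apply MulEquiv.toMonoidHom_injective
    apply PresentedGroup.ext
    rintro (_|_)
    · show ((φ₀ m)^(2*k+1)) (AX m) = AX m
      rw [pow_succ, MulAut.mul_apply, phi_iter, φ₀_X, o1, inv_mul_cancel_left]
    · show ((φ₀ m)^(2*k+1)) (AY m) = AY m
      rw [pow_succ, MulAut.mul_apply, phi_iter, φ₀_Y]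
      have key : AX m*(AY m*(AX m*AY m)^k) = (AY m*(AX m*AY m)^k)*AY m := by
        calc AX m*(AY m*(AX m*AY m)^k) = AX m*((AX m*AY m)^k*AX m) := by rw [o1]
        _ = (AX m*AY m)^(k+1) := o2
        _ = (AX m*AY m)^k*(AX m*AY m) := pow_succ _ _
        _ = ((AX m*AY m)^k*AX m)*AY m := by simp [mul_assoc]
        _ = (AY m*(AX m*AY m)^k)*AY m := by rw [o1]
      have e : ((AY m)⁻¹*(AX m*AY m))*(AX m*AY m)^k = (AX m*AY m)^k * AY m := by
        calc ((AY m)⁻¹*(AX m*AY m))*(AX m*AY m)^k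
            = (AY m)⁻¹*(AX m*(AY m*(AX m*AY m)^k)) := by simp [mul_assoc]
        _ = (AY m)⁻¹*((AY m*(AX m*AY m)^k)*AY m) := by rw [key]
        _ = (AX m*AY m)^k*AY m := by simp [mul_assoc]
      rw [e, inv_mul_cancel_left]

lemma ofAdd_one_pow_m : (Multiplicative.ofAdd (1 : ZMod m))^m = 1 := by
  rw [← ofAdd_nsmul, nsmul_eq_mul, mul_one, ZMod.natCast_self]; rfl

def φAct : Multiplicative (ZMod m) →* MulAut (A m) := zmodHom m (φ₀ m) (phi_pow_m m)

lemma φAct_one : φAct m (Multiplicative.ofAdd (1 : ZMod m)) = φ₀ m := zmodHom_one m _ _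

abbrev Gsd := (A m) ⋊[φAct m] Multiplicative (ZMod m)

lemma hrhom : ∀ r ∈ zrels m,
    FreeGroup.lift (fun b => cond b
      (SemidirectProduct.inr (Multiplicative.ofAdd (1:ZMod m)))
      (SemidirectProduct.inl (AX m)) : ZGen → Gsd m) r = 1 := by
  rintro r (rfl | rfl)
  · rw [map_pow]
    simp only [zu, FreeGroup.lift_apply_of, cond_true]
    rw [← map_pow, ofAdd_one_pow_m, map_one]
  · simp only [map_mul, map_inv, zh, zu, FreeGroup.lift_apply_of, cond_true, cond_false,
      mul_inv_eq_one]
    ext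
    · simp [φAct_one, φ₀_X, φ₀_Y, MulAut.mul_apply]
    · simp [mul_comm]

def rhom : Z m →* Gsd m := PresentedGroup.toGroup (hrhom m)

lemma r_H : rhom m (ZH m) = SemidirectProduct.inl (AX m) := PresentedGroup.toGroup.of _
lemma r_U : rhom m (ZU m) = SemidirectProduct.inr (Multiplicative.ofAdd (1:ZMod m)) :=
  PresentedGroup.toGroup.of _

lemma hj : ∀ r ∈ arels m,
    FreeGroup.lift (fun b => cond b (ZU m*ZH m*(ZU m)⁻¹) (ZH m)) r = 1 := by
  rintro r rfl
  rw [map_mul, map_inv, mul_inv_eq_one, map_alt, map_alt]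
  simp only [ah, aa, FreeGroup.lift_apply_of, cond_true, cond_false]
  exact orb_braid (ZH m) (ZU m) m (relU m) (relHU m)

def jhom : A m →* Z m := PresentedGroup.toGroup (hj m)

lemma j_X : jhom m (AX m) = ZH m := PresentedGroup.toGroup.of _
lemma j_Y : jhom m (AY m) = ZU m*ZH m*(ZU m)⁻¹ := PresentedGroup.toGroup.of _

lemma s_one : s m (Multiplicative.ofAdd (1 : ZMod m)) = ZU m := zmodHom_one m _ _

lemma compat_gen : ∀ z, jhom m (φ₀ m z) = ZU m * jhom m z * (ZU m)⁻¹ := by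
  have h : (jhom m).comp (φ₀ m).toMonoidHom = (MulAut.conj (ZU m)).toMonoidHom.comp (jhom m) := by
    apply PresentedGroup.ext
    rintro (_|_)
    · show jhom m (φ₀ m (AX m)) = ZU m * jhom m (AX m) * (ZU m)⁻¹
      rw [φ₀_X, j_Y, j_X]
    · show jhom m (φ₀ m (AY m)) = ZU m * jhom m (AY m) * (ZU m)⁻¹
      rw [φ₀_Y, map_mul, map_inv, map_mul, j_X, j_Y]
      exact orb_conj (ZH m) (ZU m) (relHU m)
  intro z
  have h2 := DFunLike.congr_fun h z
  simpa using h2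

lemma compat_gen_inv : ∀ z, jhom m ((φ₀ m)⁻¹ z) = (ZU m)⁻¹ * jhom m z * ZU m := by
  intro z
  have h := compat_gen m ((φ₀ m)⁻¹ z)
  rw [MulAut.apply_inv_self] at h
  rw [h]; group

lemma mult_gen (g : Multiplicative (ZMod m)) :
    ∃ n : ℤ, g = (Multiplicative.ofAdd (1 : ZMod m))^n := by
  obtain ⟨n, hn⟩ := ZMod.intCast_surjective (Multiplicative.toAdd g)
  exact ⟨n, by rw [ofAdd_one_zpow, hn]; rfl⟩

lemma compat_all : ∀ (g : Multiplicative (ZMod m)) (z : A m),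
    jhom m (φAct m g z) = s m g * jhom m z * (s m g)⁻¹ := by
  suffices h : ∀ n : ℤ, ∀ z : A m,
      jhom m (φAct m ((Multiplicative.ofAdd (1:ZMod m))^n) z)
      = s m ((Multiplicative.ofAdd (1:ZMod m))^n) * jhom m z
        * (s m ((Multiplicative.ofAdd (1:ZMod m))^n))⁻¹ by
    intro g z
    obtain ⟨n, rfl⟩ := mult_gen m g
    exact h n z
  intro n
  induction n using Int.induction_on with
  | zero => intro z; simp
  | succ n ih =>
      intro z
      rw [zpow_add_one, map_mul, map_mul, MulAut.mul_apply, φAct_one, s_one, ih, compat_gen]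
      group
  | pred n ih =>
      intro z
      rw [zpow_sub_one, map_mul, map_mul, MulAut.mul_apply, map_inv, map_inv, φAct_one, s_one,
        ih, compat_gen_inv]
      group

def ψhom : Gsd m →* Z m :=
  SemidirectProduct.lift (jhom m) (s m) (by
    intro g
    apply MonoidHom.ext
    intro z
    simp only [MonoidHom.comp_apply, MulEquiv.coe_toMonoidHom, MulAut.conj_apply]
    exact compat_all m g z)

lemma ψ_inl (z : A m) : ψhom m (SemidirectProduct.inl z) = jhom m z :=
  SemidirectProduct.lift_inl _ _ _ _

lemma ψ_inr (g : Multiplicative (ZMod m)) : ψhom m (SemidirectProduct.inr g) = s m g :=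
  SemidirectProduct.lift_inr _ _ _ _

lemma ψ_r : (ψhom m).comp (rhom m) = MonoidHom.id _ := by
  apply PresentedGroup.ext
  rintro (_|_)
  · show ψhom m (rhom m (ZH m)) = ZH m
    rw [r_H, ψ_inl, j_X]
  · show ψhom m (rhom m (ZU m)) = ZU m
    rw [r_U, ψ_inr, s_one]

lemma r_j : ∀ z, rhom m (jhom m z) = SemidirectProduct.inl z := by
  have h : (rhom m).comp (jhom m) = (SemidirectProduct.inl : A m →* Gsd m) := by
    apply PresentedGroup.ext
    rintro (_|_)
    · show rhom m (jhom m (AX m)) = SemidirectProduct.inl (AX m)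
      rw [j_X, r_H]
    · show rhom m (jhom m (AY m)) = SemidirectProduct.inl (AY m)
      rw [j_Y, map_mul, map_mul, map_inv, r_H, r_U,
        show AY m = φAct m (Multiplicative.ofAdd (1:ZMod m)) (AX m) from by rw [φAct_one, φ₀_X],
        SemidirectProduct.inl_aut, map_inv]
  intro z; exact DFunLike.congr_fun h z

lemma π_eq : π m = SemidirectProduct.rightHom.comp (rhom m) := by
  apply PresentedGroup.ext
  rintro (_|_)
  · show π m (ZH m) = SemidirectProduct.rightHom (rhom m (ZH m))
    rw [π_ZH, r_H, SemidirectProduct.rightHom_inl]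
  · show π m (ZU m) = SemidirectProduct.rightHom (rhom m (ZU m))
    rw [π_ZU, r_U, SemidirectProduct.rightHom_inr]
theorem stmt_4 (m : ℕ) (hm : 2 ≤ m) :
    ∃ (π : Z m →* Multiplicative (ZMod m))
      (s : Multiplicative (ZMod m) →* Z m)
      (e : A m ≃* π.ker),
      Function.Surjective π ∧
      π (PresentedGroup.of false) = 1 ∧
      π (PresentedGroup.of true) = Multiplicative.ofAdd (1 : ZMod m) ∧
      π.comp s = MonoidHom.id _ ∧
      s (Multiplicative.ofAdd (1 : ZMod m)) = PresentedGroup.of true ∧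
      (e (PresentedGroup.of false) : Z m) = PresentedGroup.of false ∧
      (e (PresentedGroup.of true) : Z m) =
        PresentedGroup.of true * PresentedGroup.of false * (PresentedGroup.of true)⁻¹ := by
  have hπs : (π m).comp (s m) = MonoidHom.id _ := by
    apply zmod_hom_ext
    rw [MonoidHom.comp_apply, s_one, π_ZU, MonoidHom.id_apply]
  have hker : ∀ z : A m, jhom m z ∈ (π m).ker := by
    intro z
    rw [MonoidHom.mem_ker, π_eq, MonoidHom.comp_apply, r_j, SemidirectProduct.rightHom_inl]
  have hinj : Function.Injective ((jhom m).codRestrict _ hker) := by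
    intro a b hab
    have h1 : jhom m a = jhom m b := congrArg Subtype.val hab
    have h2 : (SemidirectProduct.inl a : Gsd m) = SemidirectProduct.inl b := by
      rw [← r_j, ← r_j, h1]
    exact SemidirectProduct.inl_injective h2
  have hsurj : Function.Surjective ((jhom m).codRestrict _ hker) := by
    rintro ⟨z, hz⟩
    rw [MonoidHom.mem_ker, π_eq, MonoidHom.comp_apply] at hz
    have hz2 : rhom m z = SemidirectProduct.inl ((rhom m z).left) := by
      have h3 := SemidirectProduct.inl_left_mul_inr_right (rhom m z)
      rw [show (rhom m z).right = 1 from hz, map_one, mul_one] at h3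
      exact h3.symm
    refine ⟨(rhom m z).left, ?_⟩
    apply Subtype.ext
    show jhom m ((rhom m z).left) = z
    rw [← ψ_inl, ← hz2]
    exact DFunLike.congr_fun (ψ_r m) z
  exact ⟨π m, s m, MulEquiv.ofBijective ((jhom m).codRestrict _ hker) ⟨hinj, hsurj⟩,
    fun g => ⟨s m g, DFunLike.congr_fun hπs g⟩, π_ZH m, π_ZU m, hπs, s_one m, j_X m, j_Y m⟩

end Stmt4
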